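/- arXiv:2210.09522 — 2 statements merged into one kernel-verified Lean document; each statement's English description precedes it below -/
import Mathlib

section
/- Let d ≥ 3 and let κ_d = π^{d/2}/Γ(d/2 + 1) denote the volume of the d-dimensional unit ball. For every 0 < r ≤ R there exists a family of at least (R/r)^{d−2} axis-parallel cubes of side length (κ_d r^{d−2} R²)^{1/d}, with pairwise disjoint interiors, all contained in the closed ball centered at the origin of radius R(1 + √d · κ_d^{1/d} · (r^{d−2}/R^{d−2})^{1/d}). -/
open Metric Set MeasureTheory

/-- The volume `κ_d = π^{d/2}/Γ(d/2+1)` of the unit ball in `ℝ^d`. -/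
noncomputable def unitBallVolume (d : ℕ) : ℝ :=
  Real.pi ^ ((d : ℝ) / 2) / Real.Gamma ((d : ℝ) / 2 + 1)

/-- The axis-parallel cube `z + [0,ℓ]^d` in `ℝ^d`. -/
def axisCube (d : ℕ) (z : EuclideanSpace ℝ (Fin d)) (ℓ : ℝ) : Set (EuclideanSpace ℝ (Fin d)) :=
  {x | ∀ i, x i ∈ Set.Icc (z i) (z i + ℓ)}

lemma axisCube_eq (d : ℕ) (z : EuclideanSpace ℝ (Fin d)) (ℓ : ℝ) :
    axisCube d z ℓ =
      (MeasurableEquiv.toLp 2 (Fin d → ℝ)).symm ⁻¹'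
        (Set.pi Set.univ fun i => Set.Icc (z i) (z i + ℓ)) := by
  ext x
  simp [axisCube, Set.mem_pi, MeasurableEquiv.coe_toLp_symm, Pi.le_def, forall_and]

lemma volume_axisCube (d : ℕ) (z : EuclideanSpace ℝ (Fin d)) {ℓ : ℝ} (hℓ : 0 ≤ ℓ) :
    volume (axisCube d z ℓ) = ENNReal.ofReal (ℓ ^ d) := by
  rw [axisCube_eq,
    (EuclideanSpace.volume_preserving_symm_measurableEquiv_toLp (Fin d)).measure_preimage
      (MeasurableSet.univ_pi fun i => measurableSet_Icc).nullMeasurableSet,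
    volume_pi_pi]
  simp [Real.volume_Icc, ← ENNReal.ofReal_pow hℓ]

lemma interior_axisCube_subset (d : ℕ) (z : EuclideanSpace ℝ (Fin d)) (ℓ : ℝ) :
    interior (axisCube d z ℓ) ⊆ {x | ∀ i, x i ∈ Set.Ioo (z i) (z i + ℓ)} := by
  have h : axisCube d z ℓ =
      (PiLp.continuousLinearEquiv 2 ℝ (fun _ : Fin d => ℝ)).toHomeomorph ⁻¹'
        (Set.pi Set.univ fun i => Set.Icc (z i) (z i + ℓ)) := by
    ext x
    simp only [axisCube, Set.mem_setOf_eq, Set.mem_preimage, Set.mem_pi, Set.mem_univ,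
      true_implies]
    exact Iff.rfl
  rw [h, ← Homeomorph.preimage_interior, interior_pi_set Set.finite_univ]
  intro x hx i
  have := hx i (Set.mem_univ i)
  simpa [interior_Icc] using this

lemma abs_coord_le_norm {d : ℕ} (x : EuclideanSpace ℝ (Fin d)) (i : Fin d) : |x i| ≤ ‖x‖ := by
  rw [EuclideanSpace.norm_eq, ← Real.sqrt_sq_eq_abs]
  apply Real.sqrt_le_sqrt
  have : (x i) ^ 2 = ‖x i‖ ^ 2 := by simp [Real.norm_eq_abs, sq_abs]
  rw [this]
  exact Finset.single_le_sum (f := fun j => ‖x j‖ ^ 2) (fun j _ => by positivity)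
    (Finset.mem_univ i)

set_option maxHeartbeats 1000000 in
/-- **Packing lemma.** For `d ≥ 3` and `0 < r ≤ R` one can pack at least `(R/r)^{d-2}`
axis-parallel cubes of side length `(κ_d r^{d-2} R²)^{1/d}` with pairwise disjoint interiors
into the closed ball centered at the origin of radius
`R(1 + √d κ_d^{1/d} (r^{d-2}/R^{d-2})^{1/d})`. -/
theorem cube_packing (d : ℕ) (hd : 3 ≤ d) (r R : ℝ) (hr : 0 < r) (hrR : r ≤ R) :
    ∃ (N : ℕ) (z : Fin N → EuclideanSpace ℝ (Fin d)),
      ((R / r) ^ (d - 2) : ℝ) ≤ (N : ℝ) ∧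
      (∀ n : Fin N,
        axisCube d (z n) ((unitBallVolume d * r ^ (d - 2) * R ^ 2) ^ ((1 : ℝ) / d)) ⊆
          closedBall (0 : EuclideanSpace ℝ (Fin d))
            (R * (1 + Real.sqrt d * unitBallVolume d ^ ((1 : ℝ) / d) *
              (r ^ (d - 2) / R ^ (d - 2)) ^ ((1 : ℝ) / d)))) ∧
      Pairwise (fun m n : Fin N =>
        Disjoint
          (interior (axisCube d (z m) ((unitBallVolume d * r ^ (d - 2) * R ^ 2) ^ ((1 : ℝ) / d))))
          (interior (axisCube d (z n) ((unitBallVolume d * r ^ (d - 2) * R ^ 2) ^ ((1 : ℝ) / d)))))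
    := by
  classical
  haveI : Nonempty (Fin d) := ⟨⟨0, by omega⟩⟩
  set κ := unitBallVolume d with hκdef
  have hR : 0 < R := hr.trans_le hrR
  have hdR : (0 : ℝ) < d := by exact_mod_cast (by omega : 0 < d)
  have hdne : (d : ℝ) ≠ 0 := hdR.ne'
  have hκpos : 0 < κ := by
    apply div_pos (Real.rpow_pos_of_pos Real.pi_pos _)
    exact Real.Gamma_pos_of_pos (by positivity)
  set ℓ := (κ * r ^ (d - 2) * R ^ 2) ^ ((1 : ℝ) / d) with hℓdef
  have hX : 0 < κ * r ^ (d - 2) * R ^ 2 := by positivity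
  have hℓpos : 0 < ℓ := Real.rpow_pos_of_pos hX _
  have hℓd : ℓ ^ d = κ * r ^ (d - 2) * R ^ 2 := by
    rw [hℓdef, ← Real.rpow_natCast (_ ^ ((1:ℝ)/d)) d, ← Real.rpow_mul hX.le,
      one_div, inv_mul_cancel₀ hdne, Real.rpow_one]
  -- the lattice of floor-corners coming from points of the ball
  set f : EuclideanSpace ℝ (Fin d) → (Fin d → ℤ) := fun x i => ⌊x i / ℓ⌋ with hfdef
  set S : Set (Fin d → ℤ) := f '' (closedBall (0 : EuclideanSpace ℝ (Fin d)) R) with hSdef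
  have hSfin : S.Finite := by
    apply Set.Finite.subset
      (Set.Finite.pi (fun i : Fin d => Set.finite_Icc (⌊-(R / ℓ)⌋) (⌊R / ℓ⌋)))
    rintro a ⟨x, hx, rfl⟩
    intro i _
    have hxi : |x i| ≤ R := by
      have := abs_coord_le_norm x i
      rw [mem_closedBall, dist_zero_right] at hx
      linarith
    have habs := abs_le.mp hxi
    constructor
    · exact Int.floor_le_floor (by rw [← neg_div]; exact (div_le_div_iff_of_pos_right hℓpos).mpr habs.1)
    · exact Int.floor_le_floor ((div_le_div_iff_of_pos_right hℓpos).mpr habs.2)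
  obtain ⟨F, hF⟩ : ∃ F : Finset (Fin d → ℤ), ∀ a, a ∈ F ↔ a ∈ S :=
    ⟨hSfin.toFinset, fun a => hSfin.mem_toFinset⟩
  set N := F.card with hNdef
  set e : F ≃ Fin N := F.equivFin with hedef
  set c : (Fin d → ℤ) → EuclideanSpace ℝ (Fin d) :=
    fun a => (WithLp.equiv 2 (Fin d → ℝ)).symm (fun i => ℓ * (a i : ℝ)) with hcdef
  have hc_apply : ∀ (a : Fin d → ℤ) (i : Fin d), c a i = ℓ * (a i : ℝ) := fun a i => rfl
  set z : Fin N → EuclideanSpace ℝ (Fin d) := fun n => c ((e.symm n : F) : Fin d → ℤ) with hzdef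
  have hmemcube : ∀ x : EuclideanSpace ℝ (Fin d), x ∈ axisCube d (c (f x)) ℓ := by
    intro x i
    rw [Set.mem_Icc, hc_apply]
    constructor
    · calc ℓ * ((f x i : ℝ)) ≤ ℓ * (x i / ℓ) := by
            exact mul_le_mul_of_nonneg_left (Int.floor_le _) hℓpos.le
        _ = x i := by field_simp
    · have h2 : x i / ℓ < (f x i : ℝ) + 1 := Int.lt_floor_add_one _
      have : x i = ℓ * (x i / ℓ) := by field_simp
      nlinarith
  refine ⟨N, z, ?_, ?_, ?_⟩
  · -- counting
    have hcover : closedBall (0 : EuclideanSpace ℝ (Fin d)) R ⊆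
        ⋃ n : Fin N, axisCube d (z n) ℓ := by
      intro x hx
      have haF : f x ∈ F := (hF _).mpr ⟨x, hx, rfl⟩
      refine Set.mem_iUnion.mpr ⟨e ⟨f x, haF⟩, ?_⟩
      have hz : z (e ⟨f x, haF⟩) = c (f x) := by rw [hzdef]; simp
      rw [hz]
      exact hmemcube x
    have hvol := (measure_mono hcover).trans (measure_iUnion_fintype_le volume _)
    rw [EuclideanSpace.volume_closedBall] at hvol
    simp only [Fintype.card_fin] at hvol
    have hpi : Real.sqrt Real.pi ^ d = Real.pi ^ ((d : ℝ) / 2) := by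
      rw [Real.sqrt_eq_rpow, ← Real.rpow_natCast (Real.pi ^ ((1:ℝ)/(2:ℝ))) d,
        ← Real.rpow_mul Real.pi_pos.le]
      congr 1; ring
    rw [hpi] at hvol
    have hconst : Real.pi ^ ((d : ℝ) / 2) / Real.Gamma ((d : ℝ) / 2 + 1) = κ := rfl
    rw [hconst] at hvol
    have hsum : (∑ n : Fin N, volume (axisCube d (z n) ℓ)) =
        (N : ENNReal) * ENNReal.ofReal (ℓ ^ d) := by
      rw [Finset.sum_congr rfl (fun n _ => volume_axisCube d (z n) hℓpos.le)]
      simp [Finset.sum_const, Finset.card_univ, nsmul_eq_mul]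
    rw [hsum, ← ENNReal.ofReal_pow hR.le, ← ENNReal.ofReal_mul (by positivity),
      ← ENNReal.ofReal_natCast N, ← ENNReal.ofReal_mul (Nat.cast_nonneg N)] at hvol
    have hreal : R ^ d * κ ≤ (N : ℝ) * ℓ ^ d :=
      (ENNReal.ofReal_le_ofReal_iff (by positivity)).mp hvol
    have hRd : R ^ d = R ^ (d - 2) * R ^ 2 := by rw [← pow_add]; congr 1; omega
    rw [hℓd, hRd] at hreal
    have key : R ^ (d - 2) ≤ (N : ℝ) * r ^ (d - 2) := by
      have h3 : R ^ (d - 2) * (κ * R ^ 2) ≤ ((N : ℝ) * r ^ (d - 2)) * (κ * R ^ 2) := by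
        nlinarith [hreal]
      exact le_of_mul_le_mul_right h3 (by positivity)
    rw [div_pow, div_le_iff₀ (by positivity)]
    linarith
  · -- containment
    intro n
    obtain ⟨x, hx, hfx⟩ := (hF _).mp (e.symm n).2
    have hx_cube : x ∈ axisCube d (z n) ℓ := by
      have : z n = c (f x) := by rw [hzdef, hfx]
      rw [this]
      exact hmemcube x
    intro y hy
    have hdist : dist y x ≤ Real.sqrt d * ℓ := by
      rw [EuclideanSpace.dist_eq]
      have hsum : (∑ i, dist (y i) (x i) ^ 2) ≤ (d : ℝ) * ℓ ^ 2 := by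
        have hbd : ∀ i : Fin d, dist (y i) (x i) ^ 2 ≤ ℓ ^ 2 := by
          intro i
          obtain ⟨h1a, h1b⟩ := hy i
          obtain ⟨h2a, h2b⟩ := hx_cube i
          have habs : |y i - x i| ≤ ℓ := abs_le.mpr ⟨by linarith, by linarith⟩
          rw [Real.dist_eq]
          nlinarith [abs_nonneg (y i - x i)]
        calc (∑ i, dist (y i) (x i) ^ 2) ≤ ∑ _i : Fin d, ℓ ^ 2 :=
              Finset.sum_le_sum (fun i _ => hbd i)
          _ = (d : ℝ) * ℓ ^ 2 := by
              rw [Finset.sum_const, Finset.card_univ, Fintype.card_fin, nsmul_eq_mul]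
      calc Real.sqrt (∑ i, dist (y i) (x i) ^ 2) ≤ Real.sqrt ((d : ℝ) * ℓ ^ 2) :=
            Real.sqrt_le_sqrt hsum
        _ = Real.sqrt d * ℓ := by
            rw [Real.sqrt_mul hdR.le, Real.sqrt_sq hℓpos.le]
    have hrad : R * (1 + Real.sqrt d * κ ^ ((1:ℝ)/d) * (r ^ (d - 2) / R ^ (d - 2)) ^ ((1:ℝ)/d))
        = R + Real.sqrt d * ℓ := by
      have hℓR : ℓ = R * (κ ^ ((1:ℝ)/d) * (r ^ (d - 2) / R ^ (d - 2)) ^ ((1:ℝ)/d)) := by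
        rw [hℓdef, Real.div_rpow (by positivity) (by positivity),
          Real.mul_rpow (by positivity) (by positivity),
          Real.mul_rpow (by positivity) (by positivity)]
        have h2 : (R ^ 2) ^ ((1:ℝ)/d) * (R ^ (d - 2)) ^ ((1:ℝ)/d) = R := by
          rw [← Real.mul_rpow (by positivity) (by positivity), ← pow_add]
          have hadd : 2 + (d - 2) = d := by omega
          rw [hadd, ← Real.rpow_natCast R d, ← Real.rpow_mul hR.le, mul_one_div,
            div_self hdne, Real.rpow_one]
        have hpos : (0:ℝ) < (R ^ (d - 2)) ^ ((1:ℝ)/d) := Real.rpow_pos_of_pos (by positivity) _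
        field_simp
        linear_combination h2
      rw [hℓR]; ring
    rw [mem_closedBall, dist_zero_right, hrad]
    calc ‖y‖ = dist y 0 := by rw [dist_zero_right]
      _ ≤ dist y x + dist x 0 := dist_triangle _ _ _
      _ ≤ Real.sqrt d * ℓ + R := by
          rw [mem_closedBall] at hx
          linarith
      _ = R + Real.sqrt d * ℓ := by ring
  · -- disjointness
    intro m n hmn
    have hab : ((e.symm m : F) : Fin d → ℤ) ≠ ((e.symm n : F) : Fin d → ℤ) := by
      intro h
      exact hmn (e.symm.injective (Subtype.coe_injective h))
    obtain ⟨i, hi⟩ := Function.ne_iff.mp hab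
    refine Disjoint.mono (interior_axisCube_subset _ _ _) (interior_axisCube_subset _ _ _) ?_
    rw [Set.disjoint_left]
    rintro x hxm hxn
    obtain ⟨h1a, h1b⟩ := hxm i
    obtain ⟨h2a, h2b⟩ := hxn i
    have e1 : z m i = ℓ * (((e.symm m : F) : Fin d → ℤ) i : ℝ) := rfl
    have e2 : z n i = ℓ * (((e.symm n : F) : Fin d → ℤ) i : ℝ) := rfl
    rw [e1] at h1a h1b
    rw [e2] at h2a h2b
    rcases hi.lt_or_gt with h | h
    · have hcast : ((((e.symm m : F) : Fin d → ℤ) i : ℝ)) + 1 ≤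
          (((e.symm n : F) : Fin d → ℤ) i : ℝ) := by exact_mod_cast h
      nlinarith
    · have hcast : ((((e.symm n : F) : Fin d → ℤ) i : ℝ)) + 1 ≤
          (((e.symm m : F) : Fin d → ℤ) i : ℝ) := by exact_mod_cast h
      nlinarith
end

section
/- Let d ≥ 3 and let Ω be a continuous function on S^{d−1} with ∫_{S^{d−1}} Ω dσ = 0 that does not vanish identically; set K(x) = Ω(x/|x|)/|x|^{d−2}. Then there exist z₀ ∈ B(0,1), radii 0 < s < t, and a constant c > 0 such that | ∫_{B(0,1) ∩ (B(z₀,t) \ B(z₀,s))} K(z₀ − ζ) dm_d(ζ) | ≥ c. -/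
open MeasureTheory Metric Set

private lemma shift_integral (d : ℕ) (K : EuclideanSpace ℝ (Fin d) → ℝ)
    (z₀ : EuclideanSpace ℝ (Fin d)) (s t : ℝ) :
    ∫ ζ in ball z₀ t \ ball z₀ s, K (z₀ - ζ) =
      ∫ x in ball (0 : EuclideanSpace ℝ (Fin d)) t \ ball 0 s, K x := by
  have hmp : MeasurePreserving (fun ζ : EuclideanSpace ℝ (Fin d) => z₀ - ζ) volume volume :=
    Measure.measurePreserving_sub_left volume z₀
  have hemb : MeasurableEmbedding (fun ζ : EuclideanSpace ℝ (Fin d) => z₀ - ζ) :=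
    (Homeomorph.subLeft z₀).measurableEmbedding
  have h := hmp.setIntegral_preimage_emb hemb K (ball (0 : EuclideanSpace ℝ (Fin d)) t \ ball 0 s)
  have hset : (fun ζ : EuclideanSpace ℝ (Fin d) => z₀ - ζ) ⁻¹' (ball 0 t \ ball 0 s)
      = ball z₀ t \ ball z₀ s := by
    ext ζ
    simp [dist_eq_norm, norm_sub_rev z₀ ζ]
  rw [hset] at h
  exact h


private lemma annulus_polar (d : ℕ) (hd : 3 ≤ d) (Ω : EuclideanSpace ℝ (Fin d) → ℝ)
    (K : EuclideanSpace ℝ (Fin d) → ℝ)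
    (hK : ∀ x, K x = Ω (‖x‖⁻¹ • x) / ‖x‖ ^ (d - 2)) (s t : ℝ) (hs : 0 < s) (hst : s < t) :
    ∫ x in ball (0 : EuclideanSpace ℝ (Fin d)) t \ ball 0 s, K x =
      ((t ^ 2 - s ^ 2) / 2) *
        ∫ ω : sphere (0 : EuclideanSpace ℝ (Fin d)) 1, Ω ω
          ∂((volume : Measure (EuclideanSpace ℝ (Fin d))).toSphere) := by
  haveI : Nontrivial (EuclideanSpace ℝ (Fin d)) := by
    refine Module.nontrivial_of_finrank_pos (R := ℝ) ?_
    rw [finrank_euclideanSpace_fin]; omega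
  set A : Set (EuclideanSpace ℝ (Fin d)) := ball (0 : EuclideanSpace ℝ (Fin d)) t \ ball 0 s
    with hA
  have hAm : MeasurableSet A := measurableSet_ball.diff measurableSet_ball
  have hdim : Module.finrank ℝ (EuclideanSpace ℝ (Fin d)) = d := finrank_euclideanSpace_fin
  -- step 1: to indicator integral over {0}ᶜ subtype
  have h1 : ∫ x in A, K x = ∫ x : ({(0 : EuclideanSpace ℝ (Fin d))}ᶜ :
        Set (EuclideanSpace ℝ (Fin d))), A.indicator K x.1
      ∂((volume : Measure (EuclideanSpace ℝ (Fin d))).comap Subtype.val) := by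
    rw [integral_subtype_comap (measurableSet_singleton (0 : EuclideanSpace ℝ (Fin d))).compl,
      MeasureTheory.restrict_compl_singleton, integral_indicator hAm]
  -- step 2: polar
  have hmp := (volume : Measure (EuclideanSpace ℝ (Fin d))).measurePreserving_homeomorphUnitSphereProd
  set g : sphere (0 : EuclideanSpace ℝ (Fin d)) 1 × Ioi (0 : ℝ) → ℝ :=
    fun y => A.indicator K
      (((homeomorphUnitSphereProd (EuclideanSpace ℝ (Fin d))).symm y :
        ({(0 : EuclideanSpace ℝ (Fin d))}ᶜ : Set (EuclideanSpace ℝ (Fin d)))) :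
        EuclideanSpace ℝ (Fin d)) with hg
  have h2 : ∫ x : ({(0 : EuclideanSpace ℝ (Fin d))}ᶜ : Set (EuclideanSpace ℝ (Fin d))),
        A.indicator K x.1
      ∂((volume : Measure (EuclideanSpace ℝ (Fin d))).comap Subtype.val)
      = ∫ y, g y ∂(((volume : Measure (EuclideanSpace ℝ (Fin d))).toSphere).prod
          (Measure.volumeIoiPow (Module.finrank ℝ (EuclideanSpace ℝ (Fin d)) - 1))) := by
    rw [← hmp.integral_comp (Homeomorph.measurableEmbedding _) g]
    refine integral_congr_ae (Filter.Eventually.of_forall fun x => ?_)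
    simp only [hg, Homeomorph.symm_apply_apply]
  -- step 3: factor as product
  have h3 : ∀ y : sphere (0 : EuclideanSpace ℝ (Fin d)) 1 × Ioi (0 : ℝ),
      g y = Ω y.1 * (Ico s t).indicator (fun r : ℝ => (r ^ (d - 2))⁻¹) y.2 := by
    rintro ⟨⟨ω, hω⟩, ⟨r, hr⟩⟩
    rw [mem_sphere_zero_iff_norm] at hω
    rw [mem_Ioi] at hr
    have hnorm : ‖r • ω‖ = r := by
      rw [norm_smul, hω, Real.norm_eq_abs, abs_of_pos hr, mul_one]
    have hmem : r • ω ∈ A ↔ r ∈ Ico s t := by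
      simp [hA, mem_ball_zero_iff, hnorm, mem_Ico, and_comm]
    simp only [hg, homeomorphUnitSphereProd_symm_apply_coe]
    by_cases h : r ∈ Ico s t
    · rw [indicator_of_mem (hmem.mpr h), indicator_of_mem h, hK, hnorm]
      have huv : ‖r • ω‖⁻¹ • r • ω = ω := by
        rw [hnorm, smul_smul, inv_mul_cancel₀ hr.ne', one_smul]
      rw [smul_smul, inv_mul_cancel₀ hr.ne', one_smul, div_eq_mul_inv]
    · rw [indicator_of_notMem (fun hm => h (hmem.mp hm)), indicator_of_notMem h, mul_zero]
  -- step 4: Fubini for product of functions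
  have h4 : ∫ y, g y ∂(((volume : Measure (EuclideanSpace ℝ (Fin d))).toSphere).prod
          (Measure.volumeIoiPow (Module.finrank ℝ (EuclideanSpace ℝ (Fin d)) - 1)))
      = (∫ ω : sphere (0 : EuclideanSpace ℝ (Fin d)) 1, Ω ω
          ∂((volume : Measure (EuclideanSpace ℝ (Fin d))).toSphere)) *
        ∫ r : Ioi (0 : ℝ), (Ico s t).indicator (fun r : ℝ => (r ^ (d - 2))⁻¹) r.1
          ∂(Measure.volumeIoiPow (d - 1)) := by
    rw [hdim]
    rw [integral_congr_ae (Filter.Eventually.of_forall h3)]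
    exact integral_prod_mul (fun ω : sphere (0 : EuclideanSpace ℝ (Fin d)) 1 => Ω ω)
      (fun r : Ioi (0 : ℝ) => (Ico s t).indicator (fun r : ℝ => (r ^ (d - 2))⁻¹) r.1)
  -- step 5: the radial integral
  have h5 : ∫ r : Ioi (0 : ℝ), (Ico s t).indicator (fun r : ℝ => (r ^ (d - 2))⁻¹) r.1
      ∂(Measure.volumeIoiPow (d - 1)) = (t ^ 2 - s ^ 2) / 2 := by
    simp only [Measure.volumeIoiPow, ENNReal.ofReal]
    rw [integral_withDensity_eq_integral_smul
      ((measurable_subtype_coe.pow_const _).real_toNNReal),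
      integral_subtype_comap measurableSet_Ioi
        (fun a : ℝ => (a ^ (d - 1)).toNNReal • (Ico s t).indicator
          (fun r : ℝ => (r ^ (d - 2))⁻¹) a)]
    rw [setIntegral_congr_fun measurableSet_Ioi (g := (Ico s t).indicator (fun x : ℝ => x))
      (fun r hr => ?_)]
    · have hsub : Ioi (0 : ℝ) ∩ Ico s t = Ico s t :=
        inter_eq_self_of_subset_right (fun x hx => lt_of_lt_of_le hs hx.1)
      rw [setIntegral_indicator measurableSet_Ico, hsub,
        setIntegral_congr_set Ico_ae_eq_Ioc,
        ← intervalIntegral.integral_of_le hst.le, integral_id]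
    · by_cases hmem : r ∈ Ico s t
      · rw [indicator_of_mem hmem, indicator_of_mem hmem, NNReal.smul_def,
          Real.coe_toNNReal _ (pow_nonneg (le_of_lt hr) _), smul_eq_mul]
        have hd1 : d - 1 = (d - 2) + 1 := by omega
        rw [hd1, pow_succ, mul_comm (r ^ (d - 2)) r, mul_assoc,
          mul_inv_cancel₀ (pow_ne_zero _ (ne_of_gt hr)), mul_one]
      · rw [indicator_of_notMem hmem, indicator_of_notMem hmem, smul_zero]
  rw [h1, h2, h4, h5, mul_comm]


section Aux
variable (d : ℕ)

-- geometry helper: points of the annulus outside the unit ball have direction close to ξ₀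
private lemma cap_geometry (ξ₀ : EuclideanSpace ℝ (Fin d))
    (hξ : ‖ξ₀‖ = 1) (η : ℝ) (hη0 : 0 < η) (hη1 : η ≤ 1/2)
    (ζ : EuclideanSpace ℝ (Fin d)) (hζ1 : 1 ≤ ‖ζ‖)
    (hρs : 1/4 ≤ ‖((-3/4 : ℝ) • ξ₀) - ζ‖) (hρt : ‖((-3/4 : ℝ) • ξ₀) - ζ‖ < (1+η)/4) :
    ‖(‖((-3/4 : ℝ) • ξ₀) - ζ‖⁻¹ • (((-3/4 : ℝ) • ξ₀) - ζ)) - ξ₀‖^2 ≤ 3*η := by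
  set x : EuclideanSpace ℝ (Fin d) := ((-3/4 : ℝ) • ξ₀) - ζ with hx
  set ρ : ℝ := ‖x‖ with hρ
  have hρ0 : 0 < ρ := lt_of_lt_of_le (by norm_num) hρs
  set u : EuclideanSpace ℝ (Fin d) := ρ⁻¹ • x with hu
  have hu1 : ‖u‖ = 1 := by
    rw [hu, norm_smul, Real.norm_eq_abs, abs_inv, abs_of_pos hρ0, hρ, inv_mul_cancel₀ hρ0.ne']
  have hxu : x = ρ • u := (smul_inv_smul₀ hρ0.ne' x).symm
  set p : ℝ := inner ℝ ξ₀ u with hp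
  have hζeq : ζ = ((-3/4 : ℝ) • ξ₀) - x := by rw [hx]; abel
  have hinner : inner ℝ ((-3/4 : ℝ) • ξ₀) x = (-3/4) * (ρ * p) := by
    rw [hxu, real_inner_smul_left, real_inner_smul_right, hp]
  have hζsq : ‖ζ‖^2 = 9/16 + (3/2)*(ρ*p) + ρ^2 := by
    rw [hζeq, norm_sub_sq_real, hinner, norm_smul, Real.norm_eq_abs, hξ]
    norm_num
    ring
  have hζsq1 : (1:ℝ) ≤ 9/16 + (3/2)*(ρ*p) + ρ^2 := by
    rw [← hζsq]; nlinarith [hζ1]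
  have husq : ‖u - ξ₀‖^2 = 2 - 2*p := by
    rw [norm_sub_sq_real, hu1, hξ, real_inner_comm, ← hp]; ring
  -- key scalar inequality
  have hq : ρ^2 + (3/2)*ρ*(1-(3/2)*η) ≤ 7/16 := by
    nlinarith [mul_nonneg (by linarith : (0:ℝ) ≤ (1+η)/4 - ρ)
      (by linarith : (0:ℝ) ≤ ρ + (1+η)/4 + 3/2 - (9/4)*η), sq_nonneg η, hη0.le, hη1]
  have h3 : (3/2)*ρ*(1-(3/2)*η) ≤ (3/2)*(ρ*p) := by linarith
  have hpge : 1 - (3/2)*η ≤ p := by nlinarith [h3, hρ0]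
  rw [husq]; linarith
end Aux

/-- For `d ≥ 3` and a continuous mean-zero function `Ω` on `S^{d-1}` that does not vanish
identically, with kernel `K x = Ω(x/|x|)/|x|^{d-2}`: there exist a point `z₀` in the unit
ball, radii `0 < s < t`, and `c > 0` such that
`|∫_{B(0,1) ∩ (B(z₀,t) \ B(z₀,s))} K(z₀ − ζ) dm_d(ζ)| ≥ c`. -/
theorem exists_annulus_with_large_potential (d : ℕ) (hd : 3 ≤ d)
    (Ω : EuclideanSpace ℝ (Fin d) → ℝ)
    (hcont : ContinuousOn Ω (sphere (0 : EuclideanSpace ℝ (Fin d)) 1))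
    (hmean : ∫ ξ in sphere (0 : EuclideanSpace ℝ (Fin d)) 1, Ω ξ ∂(μH[(d:ℝ) - 1]) = 0)
    (hne : ∃ ξ ∈ sphere (0 : EuclideanSpace ℝ (Fin d)) 1, Ω ξ ≠ 0)
    (K : EuclideanSpace ℝ (Fin d) → ℝ)
    (hK : ∀ x, K x = Ω (‖x‖⁻¹ • x) / ‖x‖ ^ (d - 2)) :
    ∃ z₀ ∈ ball (0 : EuclideanSpace ℝ (Fin d)) 1, ∃ s t : ℝ, 0 < s ∧ s < t ∧ ∃ c : ℝ, 0 < c ∧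
      c ≤ |∫ ζ in ball (0 : EuclideanSpace ℝ (Fin d)) 1 ∩ (ball z₀ t \ ball z₀ s),
            K (z₀ - ζ)| := by

  classical
  obtain ⟨ξ₀, hξ₀mem, hΩξ₀⟩ := hne
  have hξ₀ : ‖ξ₀‖ = 1 := mem_sphere_zero_iff_norm.mp hξ₀mem
  set I : ℝ := ∫ ω : sphere (0 : EuclideanSpace ℝ (Fin d)) 1, Ω ω
    ∂((volume : Measure (EuclideanSpace ℝ (Fin d))).toSphere) with hIdef
  by_cases hI0 : I = 0
  · -- mean zero w.r.t. toSphere: poke the annulus out of the ball near -ξ₀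
    -- continuity at ξ₀ gives a cap where Ω keeps its sign
    have hcw := hcont ξ₀ hξ₀mem
    rw [Metric.continuousWithinAt_iff] at hcw
    obtain ⟨δ, hδpos, hδ⟩ := hcw (|Ω ξ₀|/2) (by positivity)
    set η : ℝ := min (δ^2/4) (1/2) with hηdef
    have hη0 : 0 < η := lt_min (by positivity) (by norm_num)
    have hη1 : η ≤ 1/2 := min_le_right _ _
    have hηδ : η ≤ δ^2/4 := min_le_left _ _
    set z₀ : EuclideanSpace ℝ (Fin d) := (-3/4 : ℝ) • ξ₀ with hz₀def
    have hz₀norm : ‖z₀‖ = 3/4 := by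
      rw [hz₀def, norm_smul, Real.norm_eq_abs, hξ₀]; norm_num
    have hz₀mem : z₀ ∈ ball (0 : EuclideanSpace ℝ (Fin d)) 1 := by
      rw [mem_ball_zero_iff, hz₀norm]; norm_num
    set s : ℝ := 1/4 with hsdef
    set t : ℝ := (1+η)/4 with htdef
    have hs0 : (0:ℝ) < s := by rw [hsdef]; norm_num
    have hst : s < t := by rw [hsdef, htdef]; linarith
    have ht0 : (0:ℝ) < t := hs0.trans hst
    set A : Set (EuclideanSpace ℝ (Fin d)) := ball z₀ t \ ball z₀ s with hAdef
    set B : Set (EuclideanSpace ℝ (Fin d)) := ball (0 : EuclideanSpace ℝ (Fin d)) 1 with hBdef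
    set R : Set (EuclideanSpace ℝ (Fin d)) := A \ B with hRdef
    have hAm : MeasurableSet A := measurableSet_ball.diff measurableSet_ball
    have hBm : MeasurableSet B := measurableSet_ball
    have hRm : MeasurableSet R := hAm.diff hBm
    have hAfin : volume A ≠ ⊤ :=
      ((measure_mono (diff_subset : A ⊆ ball z₀ t)).trans_lt measure_ball_lt_top).ne
    -- basic facts about points of A
    have hAx : ∀ ζ ∈ A, z₀ - ζ ≠ 0 ∧ s ≤ ‖z₀ - ζ‖ ∧ ‖z₀ - ζ‖ < t := by
      intro ζ hζ
      obtain ⟨hζt, hζs⟩ := hζ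
      rw [mem_ball, dist_eq_norm, ← norm_sub_rev] at hζt
      rw [mem_ball, dist_eq_norm, ← norm_sub_rev, not_lt] at hζs
      exact ⟨fun h => by simp [h] at hζs; linarith, hζs, hζt⟩
    -- bound for Ω on the sphere
    obtain ⟨M, hM⟩ := (isCompact_sphere (0 : EuclideanSpace ℝ (Fin d)) 1).exists_bound_of_continuousOn hcont
    -- continuity of K off the origin
    have hKcont : ContinuousOn K ({(0 : EuclideanSpace ℝ (Fin d))}ᶜ) := by
      have hKeq : K = fun x => Ω (‖x‖⁻¹ • x) / ‖x‖ ^ (d - 2) := funext hK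
      rw [hKeq]
      apply ContinuousOn.div
      · refine hcont.comp (ContinuousOn.smul (f := fun x : EuclideanSpace ℝ (Fin d) => ‖x‖⁻¹) (g := fun x => x) ?_ continuousOn_id) ?_
        · exact (continuous_norm.continuousOn).inv₀ fun x hx =>
            norm_ne_zero_iff.2 (by simpa using hx)
        · intro x hx
          rw [mem_sphere_zero_iff_norm, norm_smul, Real.norm_eq_abs, abs_inv, abs_norm,
            inv_mul_cancel₀ (norm_ne_zero_iff.2 (by simpa using hx))]
      · exact (continuous_norm.pow _).continuousOn
      · intro x hx
        exact pow_ne_zero _ (norm_ne_zero_iff.2 (by simpa using hx))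
    -- integrability of ζ ↦ K (z₀ - ζ) on A
    have hKfcont : ContinuousOn (fun ζ => K (z₀ - ζ)) A := by
      refine hKcont.comp ((continuous_const.sub continuous_id).continuousOn) ?_
      intro ζ hζ
      simpa using (hAx ζ hζ).1
    have hint : IntegrableOn (fun ζ => K (z₀ - ζ)) A volume := by
      refine ⟨hKfcont.aestronglyMeasurable hAm,
        HasFiniteIntegral.restrict_of_bounded (C := M / s ^ (d - 2)) hAfin.lt_top ?_⟩
      filter_upwards [ae_restrict_mem hAm] with ζ hζ
      obtain ⟨hne0, hρs, hρt⟩ := hAx ζ hζ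
      have hρ0 : (0:ℝ) < ‖z₀ - ζ‖ := hs0.trans_le hρs
      have humem : ‖z₀ - ζ‖⁻¹ • (z₀ - ζ) ∈ sphere (0 : EuclideanSpace ℝ (Fin d)) 1 := by
        rw [mem_sphere_zero_iff_norm, norm_smul, Real.norm_eq_abs, abs_inv, abs_norm,
          inv_mul_cancel₀ hρ0.ne']
      rw [Real.norm_eq_abs, hK, abs_div, abs_of_nonneg (by positivity : (0:ℝ) ≤ ‖z₀ - ζ‖ ^ (d-2))]
      have hMu := hM _ humem
      rw [Real.norm_eq_abs] at hMu
      exact div_le_div₀ (le_trans (abs_nonneg _) hMu) hMu (pow_pos hs0 _)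
        (pow_le_pow_left₀ hs0.le hρs _)
    -- the full annulus integral vanishes
    have hzero : ∫ ζ in A, K (z₀ - ζ) = 0 := by
      rw [hAdef, shift_integral d K z₀ s t,
        annulus_polar d hd Ω K hK s t hs0 hst, ← hIdef, hI0, mul_zero]
    -- split the integral
    have hunion : (B ∩ A) ∪ R = A := by
      rw [hRdef, Set.inter_comm]; exact Set.inter_union_diff A B
    have hdisj : Disjoint (B ∩ A) R := by
      rw [Set.disjoint_left]
      intro ζ hζS hζR
      exact hζR.2 hζS.1
    have hsplit : (∫ ζ in B ∩ A, K (z₀ - ζ)) + ∫ ζ in R, K (z₀ - ζ) = 0 := by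
      rw [← setIntegral_union hdisj hRm (hint.mono_set Set.inter_subset_right)
        (hint.mono_set diff_subset), hunion, hzero]
    -- direction of z₀ - ζ for ζ ∈ R lies in the cap around ξ₀
    have hcap : ∀ ζ ∈ R, |Ω (‖z₀ - ζ‖⁻¹ • (z₀ - ζ)) - Ω ξ₀| < |Ω ξ₀|/2 := by
      intro ζ hζ
      obtain ⟨hζA, hζB⟩ := hζ
      obtain ⟨hne0, hρs, hρt⟩ := hAx ζ hζA
      have hζ1 : 1 ≤ ‖ζ‖ := by
        rw [hBdef, mem_ball_zero_iff, not_lt] at hζB; exact hζB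
      have hsq := cap_geometry d ξ₀ hξ₀ η hη0 hη1 ζ hζ1 (by rw [← hz₀def]; exact hρs)
        (by rw [← hz₀def]; exact hρt)
      rw [← hz₀def] at hsq
      have hρ0 : (0:ℝ) < ‖z₀ - ζ‖ := hs0.trans_le hρs
      have humem : ‖z₀ - ζ‖⁻¹ • (z₀ - ζ) ∈ sphere (0 : EuclideanSpace ℝ (Fin d)) 1 := by
        rw [mem_sphere_zero_iff_norm, norm_smul, Real.norm_eq_abs, abs_inv, abs_norm,
          inv_mul_cancel₀ hρ0.ne']
      have hdlt : dist (‖z₀ - ζ‖⁻¹ • (z₀ - ζ)) ξ₀ < δ := by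
        rw [dist_eq_norm]
        nlinarith [norm_nonneg ((‖z₀ - ζ‖⁻¹ • (z₀ - ζ)) - ξ₀), hδpos, hηδ,
          sq_nonneg (‖(‖z₀ - ζ‖⁻¹ • (z₀ - ζ)) - ξ₀‖ - δ)]
      have := hδ humem hdlt
      rwa [Real.dist_eq] at this
    -- the region R has positive, finite volume
    have hRfin : volume R ≠ ⊤ :=
      ((measure_mono ((diff_subset).trans diff_subset)).trans_lt measure_ball_lt_top).ne
    have hRpos : 0 < (volume R).toReal := by
      have hUopen : IsOpen ({ζ : EuclideanSpace ℝ (Fin d) | 1 < ‖ζ‖} ∩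
          (ball z₀ t \ closedBall z₀ s)) :=
        ((isOpen_lt continuous_const continuous_norm)).inter
          (isOpen_ball.sdiff Metric.isClosed_closedBall)
      have hUne : (({ζ : EuclideanSpace ℝ (Fin d) | 1 < ‖ζ‖} ∩
          (ball z₀ t \ closedBall z₀ s))).Nonempty := by
        refine ⟨((-3/4 : ℝ) - (s+t)/2) • ξ₀, ?_, ?_, ?_⟩
        · simp only [mem_setOf_eq, norm_smul, Real.norm_eq_abs, hξ₀, mul_one]
          rw [abs_of_neg (by linarith)]
          linarith
        · rw [mem_ball, dist_eq_norm, hz₀def, ← sub_smul, norm_smul, Real.norm_eq_abs, hξ₀,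
            mul_one]
          rw [show (-3/4 : ℝ) - (s+t)/2 - (-3/4) = -((s+t)/2) by ring, abs_neg,
            abs_of_pos (by linarith)]
          linarith
        · rw [mem_closedBall, dist_eq_norm, hz₀def, ← sub_smul, norm_smul, Real.norm_eq_abs,
            hξ₀, mul_one, not_le]
          rw [show (-3/4 : ℝ) - (s+t)/2 - (-3/4) = -((s+t)/2) by ring, abs_neg,
            abs_of_pos (by linarith)]
          linarith
      have hUsub : ({ζ : EuclideanSpace ℝ (Fin d) | 1 < ‖ζ‖} ∩
          (ball z₀ t \ closedBall z₀ s)) ⊆ R := by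
        rintro ζ ⟨h1, h2, h3⟩
        refine ⟨⟨h2, fun hb => h3 (ball_subset_closedBall hb)⟩, ?_⟩
        intro hb
        rw [hBdef, mem_ball_zero_iff] at hb
        exact absurd h1 (not_lt.mpr hb.le)
      have := (hUopen.measure_pos volume hUne).trans_le (measure_mono hUsub)
      exact ENNReal.toReal_pos this.ne' hRfin
    -- conclude
    have habs0 : 0 < |Ω ξ₀| := abs_pos.mpr hΩξ₀
    set κ : ℝ := (|Ω ξ₀|/2) / t^(d-2) with hκdef
    have hκpos : 0 < κ := div_pos (by linarith) (pow_pos ht0 _)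
    refine ⟨z₀, hz₀mem, s, t, hs0, hst, κ * (volume R).toReal,
      mul_pos hκpos hRpos, ?_⟩
    have hSA : ball (0 : EuclideanSpace ℝ (Fin d)) 1 ∩ (ball z₀ t \ ball z₀ s) = B ∩ A := by
      rw [hAdef, hBdef]
    rw [hSA]
    have hSval : ∫ ζ in B ∩ A, K (z₀ - ζ) = - ∫ ζ in R, K (z₀ - ζ) := by linarith [hsplit]
    rw [hSval, abs_neg]
    rcases hΩξ₀.lt_or_gt with hneg | hpos
    · -- Ω ξ₀ < 0
      have habs : |Ω ξ₀| = -Ω ξ₀ := abs_of_neg hneg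
      have hptw : ∀ ζ ∈ R, κ ≤ -K (z₀ - ζ) := by
        intro ζ hζ
        obtain ⟨hne0, hρs, hρt⟩ := hAx ζ hζ.1
        have hΩn := hcap ζ hζ
        have hρ0 : (0:ℝ) < ‖z₀ - ζ‖ := hs0.trans_le hρs
        rw [habs] at hΩn
        have h1 : -Ω ξ₀/2 ≤ -Ω (‖z₀ - ζ‖⁻¹ • (z₀ - ζ)) := by
          have := (abs_lt.mp hΩn).2; linarith
        rw [hK, hκdef, habs, ← neg_div]
        exact div_le_div₀ (by linarith) h1 (pow_pos hρ0 _)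
          (pow_le_pow_left₀ hρ0.le hρt.le _)
      have hlow := setIntegral_ge_of_const_le hRm hRfin hptw
        ((hint.mono_set diff_subset).neg)
      rw [integral_neg] at hlow
      exact (le_of_eq (by rw [smul_eq_mul, mul_comm]; rfl)).trans (hlow.trans (neg_le_abs _))
    · -- 0 < Ω ξ₀
      have habs : |Ω ξ₀| = Ω ξ₀ := abs_of_pos hpos
      have hptw : ∀ ζ ∈ R, κ ≤ K (z₀ - ζ) := by
        intro ζ hζ
        obtain ⟨hne0, hρs, hρt⟩ := hAx ζ hζ.1
        have hΩn := hcap ζ hζ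
        have hρ0 : (0:ℝ) < ‖z₀ - ζ‖ := hs0.trans_le hρs
        rw [habs] at hΩn
        have h1 : Ω ξ₀/2 ≤ Ω (‖z₀ - ζ‖⁻¹ • (z₀ - ζ)) := by
          have := (abs_lt.mp hΩn).1; linarith
        rw [hK, hκdef, habs]
        exact div_le_div₀ (by linarith) h1 (pow_pos hρ0 _)
          (pow_le_pow_left₀ hρ0.le hρt.le _)
      have hlow := setIntegral_ge_of_const_le hRm hRfin hptw (hint.mono_set diff_subset)
      exact (le_of_eq (by rw [smul_eq_mul, mul_comm]; rfl)).trans (hlow.trans (le_abs_self _))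
  · -- I ≠ 0 : a fully interior annulus works
    refine ⟨0, mem_ball_self one_pos, 1/2, 1, by norm_num, by norm_num,
      |(((1:ℝ)^2 - (1/2)^2)/2) * I|, ?_, ?_⟩
    · rw [abs_pos]
      exact mul_ne_zero (by norm_num) hI0
    · have hset : ball (0 : EuclideanSpace ℝ (Fin d)) 1 ∩
          (ball (0 : EuclideanSpace ℝ (Fin d)) 1 \ ball 0 (1/2)) =
          ball (0 : EuclideanSpace ℝ (Fin d)) 1 \ ball 0 (1/2) :=
        inter_eq_self_of_subset_right diff_subset
      rw [hset, shift_integral d K 0 (1/2) 1,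
        annulus_polar d hd Ω K hK (1/2) 1 (by norm_num) (by norm_num), ← hIdef]
end
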